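/- Let R be a ring with a derivation δ. Then for every ordinal α, the ideal R^(α) of the upper left annihilator series is a δ-ideal, i.e., δ(R^(α)) ⊆ R^(α). -/

import Mathlib

/-- The upper left annihilator series of a ring `R`:
`R^(0) = 0`, `R^(α+1) = {a ∈ R : a * r ∈ R^(α) for all r ∈ R}`, and
`R^(α) = ⋃_{β < α} R^(β)` at limit ordinals `α`. -/
noncomputable def upperLeftAnnSeries (R : Type*) [Ring R] : Ordinal → Set R :=
  fun α => Ordinal.limitRecOn α
    ({0} : Set R)
    (fun _ S => {a : R | ∀ r : R, a * r ∈ S})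
    (fun o _ ih => ⋃ (β : Ordinal) (h : β < o), ih β h)

lemma upperLeftAnnSeries_zero (R : Type*) [Ring R] :
    upperLeftAnnSeries R 0 = ({0} : Set R) := Ordinal.limitRecOn_zero _ _ _

lemma upperLeftAnnSeries_succ (R : Type*) [Ring R] (α : Ordinal) :
    upperLeftAnnSeries R (α + 1) =
      {a : R | ∀ r : R, a * r ∈ upperLeftAnnSeries R α} :=
  Ordinal.limitRecOn_succ _ _ _ _

lemma upperLeftAnnSeries_limit (R : Type*) [Ring R] {α : Ordinal}
    (h : Order.IsSuccLimit α) :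
    upperLeftAnnSeries R α = ⋃ (β : Ordinal) (_ : β < α), upperLeftAnnSeries R β :=
  Ordinal.limitRecOn_limit _ _ _ _ h

lemma upperLeftAnnSeries_mul_mem {R : Type*} [Ring R] (α : Ordinal) :
    ∀ a : R, a ∈ upperLeftAnnSeries R α → ∀ r : R, a * r ∈ upperLeftAnnSeries R α := by
  induction α using Ordinal.limitRecOn with
  | zero =>
    intro a ha r
    rw [upperLeftAnnSeries_zero] at *
    simp only [Set.mem_singleton_iff] at *
    rw [ha, zero_mul]
  | add_one α ih =>
    intro a ha r
    simp only [Order.succ_eq_add_one, upperLeftAnnSeries_succ, Set.mem_setOf_eq] at *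
    intro s
    rw [mul_assoc]
    exact ha (r * s)
  | limit α hlim ih =>
    intro a ha r
    rw [upperLeftAnnSeries_limit R hlim] at *
    simp only [Set.mem_iUnion] at *
    obtain ⟨β, hβ, ha⟩ := ha
    exact ⟨β, hβ, ih β hβ a ha r⟩

lemma upperLeftAnnSeries_mono {R : Type*} [Ring R] :
    ∀ γ : Ordinal, ∀ β ≤ γ, upperLeftAnnSeries R β ⊆ upperLeftAnnSeries R γ := by
  intro γ
  induction γ using Ordinal.limitRecOn with
  | zero =>
    intro β hβ
    rw [nonpos_iff_eq_zero.mp hβ]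
  | add_one γ ih =>
    intro β hβ
    rcases Order.le_succ_iff_eq_or_le.mp hβ with h | h
    · rw [h, Order.succ_eq_add_one]
    · refine (ih β h).trans ?_
      intro a ha
      simp only [Order.succ_eq_add_one, upperLeftAnnSeries_succ, Set.mem_setOf_eq]
      exact fun r => upperLeftAnnSeries_mul_mem γ a ha r
  | limit γ hlim ih =>
    intro β hβ
    rcases eq_or_lt_of_le hβ with h | h
    · rw [h]
    · intro a ha
      rw [upperLeftAnnSeries_limit R hlim]
      simp only [Set.mem_iUnion]
      exact ⟨β, h, ha⟩

lemma upperLeftAnnSeries_sub_mem {R : Type*} [Ring R] (α : Ordinal) :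
    ∀ a b : R, a ∈ upperLeftAnnSeries R α → b ∈ upperLeftAnnSeries R α →
      a - b ∈ upperLeftAnnSeries R α := by
  induction α using Ordinal.limitRecOn with
  | zero =>
    intro a b ha hb
    rw [upperLeftAnnSeries_zero] at *
    simp only [Set.mem_singleton_iff] at *
    rw [ha, hb, sub_zero]
  | add_one α ih =>
    intro a b ha hb
    simp only [Order.succ_eq_add_one, upperLeftAnnSeries_succ, Set.mem_setOf_eq] at *
    intro r
    rw [sub_mul]
    exact ih _ _ (ha r) (hb r)
  | limit α hlim ih =>
    intro a b ha hb
    rw [upperLeftAnnSeries_limit R hlim] at *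
    simp only [Set.mem_iUnion] at *
    obtain ⟨β, hβ, ha⟩ := ha
    obtain ⟨γ, hγ, hb⟩ := hb
    refine ⟨max β γ, max_lt hβ hγ, ih _ (max_lt hβ hγ) _ _ ?_ ?_⟩
    · exact upperLeftAnnSeries_mono _ _ (le_max_left β γ) ha
    · exact upperLeftAnnSeries_mono _ _ (le_max_right β γ) hb

theorem upperLeftAnnSeries_mem_delta_ideal
    {R : Type*} [Ring R] (δ : R → R)
    (hadd : ∀ a b : R, δ (a + b) = δ a + δ b)
    (hleibniz : ∀ a b : R, δ (a * b) = δ a * b + a * δ b) :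
    ∀ α : Ordinal, ∀ a ∈ upperLeftAnnSeries R α, δ a ∈ upperLeftAnnSeries R α := by
  have hδ0 : δ 0 = 0 := by
    have := hadd 0 0
    rw [add_zero] at this
    simpa using this
  intro α
  induction α using Ordinal.limitRecOn with
  | zero =>
    intro a ha
    rw [upperLeftAnnSeries_zero] at *
    simp only [Set.mem_singleton_iff] at *
    rw [ha, hδ0]
  | add_one α ih =>
    intro a ha
    simp only [Order.succ_eq_add_one, upperLeftAnnSeries_succ, Set.mem_setOf_eq] at *
    intro r
    have h1 : δ a * r = δ (a * r) - a * δ r := by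
      rw [hleibniz, add_sub_cancel_right]
    rw [h1]
    exact upperLeftAnnSeries_sub_mem α _ _ (ih _ (ha r)) (ha (δ r))
  | limit α hlim ih =>
    intro a ha
    rw [upperLeftAnnSeries_limit R hlim] at *
    simp only [Set.mem_iUnion] at *
    obtain ⟨β, hβ, ha⟩ := ha
    exact ⟨β, hβ, ih β hβ a ha⟩
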